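/- Let (Ψ, Φ) : (ε, y) : F ⊣⊣ U : C → D be a colax adjunction between pseudofunctors with Ψ invertible. Then for every 1-cell f : A → B in D, the pair (UFf, y_f) — where y_f : y_B ∘ f ⇒ UFf ∘ y_A is the colax naturality 2-cell of y at f — exhibits UFf as a left U-extension of y_B ∘ f along y_A. In particular the 2-cell β_f := Ψ_B Ff ∘ ε_{FB} γ⁻¹ : ε_{FB} ∘ F(y_B f) ⇒ Ff is invertible and identifies the two U-extensions. -/

import Mathlib

open CategoryTheory Bicategory

universe w₁ v₁ u₁ w₂ v₂ u₂

variable {C : Type u₁} [Bicategory.{w₁, v₁} C] {D : Type u₂} [Bicategory.{w₂, v₂} D]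

/-- A colax adjunction `F ⊣⊣ U` between pseudofunctors, given componentwise: colax natural
transformations `η : 1 ⇒ UF` and `ε : FU ⇒ 1` together with modifications
`Ψ : εF ∘ Fη ⟶ 1_F` and `Φ : 1_U ⟶ Uε ∘ ηU` satisfying the swallowtail identities. -/
structure ColaxAdjunction (F : Pseudofunctor D C) (U : Pseudofunctor C D) where
  /-- components of the colax natural unit `η : 1 ⇒ UF` -/
  η : ∀ A : D, A ⟶ U.obj (F.obj A)
  /-- colax naturality 2-cells of the unit -/
  ηnat : ∀ {A B : D} (f : A ⟶ B), f ≫ η B ⟶ η A ≫ U.map (F.map f)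
  /-- local naturality of the unit -/
  η_natural : ∀ {A B : D} {f g : A ⟶ B} (θ : f ⟶ g),
    θ ▷ η B ≫ ηnat g = ηnat f ≫ η A ◁ U.map₂ (F.map₂ θ)
  /-- unit axiom for the colax natural transformation `η` -/
  η_id : ∀ A : D, ηnat (𝟙 A) =
    (λ_ (η A)).hom ≫ (ρ_ (η A)).inv ≫
      η A ◁ ((U.mapId (F.obj A)).inv ≫ U.map₂ (F.mapId A).inv)
  /-- composition axiom for the colax natural transformation `η` -/
  η_comp : ∀ {A B E : D} (f : A ⟶ B) (g : B ⟶ E), ηnat (f ≫ g) =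
    (α_ f g (η E)).hom ≫ f ◁ ηnat g ≫ (α_ f (η B) (U.map (F.map g))).inv ≫
      ηnat f ▷ U.map (F.map g) ≫ (α_ (η A) (U.map (F.map f)) (U.map (F.map g))).hom ≫
      η A ◁ ((U.mapComp (F.map f) (F.map g)).inv ≫ U.map₂ (F.mapComp f g).inv)
  /-- components of the colax natural counit `ε : FU ⇒ 1` -/
  ε' : ∀ X : C, F.obj (U.obj X) ⟶ X
  /-- colax naturality 2-cells of the counit -/
  εnat : ∀ {X Y : C} (h : X ⟶ Y), F.map (U.map h) ≫ ε' Y ⟶ ε' X ≫ h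
  /-- local naturality of the counit -/
  ε_natural : ∀ {X Y : C} {h k : X ⟶ Y} (θ : h ⟶ k),
    F.map₂ (U.map₂ θ) ▷ ε' Y ≫ εnat k = εnat h ≫ ε' X ◁ θ
  /-- unit axiom for the colax natural transformation `ε` -/
  ε_id : ∀ X : C, εnat (𝟙 X) =
    (F.map₂ (U.mapId X).hom ≫ (F.mapId (U.obj X)).hom) ▷ ε' X ≫
      (λ_ (ε' X)).hom ≫ (ρ_ (ε' X)).inv
  /-- composition axiom for the colax natural transformation `ε` -/
  ε_comp : ∀ {X Y Z : C} (h : X ⟶ Y) (k : Y ⟶ Z), εnat (h ≫ k) =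
    (F.map₂ (U.mapComp h k).hom ≫ (F.mapComp (U.map h) (U.map k)).hom) ▷ ε' Z ≫
      (α_ (F.map (U.map h)) (F.map (U.map k)) (ε' Z)).hom ≫
      F.map (U.map h) ◁ εnat k ≫ (α_ (F.map (U.map h)) (ε' Y) k).inv ≫
      εnat h ▷ k ≫ (α_ (ε' X) h k).hom
  /-- components of the modification `Ψ : εF ∘ Fη ⟶ 1_F` -/
  Ψ : ∀ A : D, F.map (η A) ≫ ε' (F.obj A) ⟶ 𝟙 (F.obj A)
  /-- components of the modification `Φ : 1_U ⟶ Uε ∘ ηU` -/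
  Φ : ∀ X : C, 𝟙 (U.obj X) ⟶ η (U.obj X) ≫ U.map (ε' X)
  /-- the modification axiom for `Ψ` -/
  Ψ_mod : ∀ {A B : D} (f : A ⟶ B),
    F.map f ◁ Ψ B ≫ (ρ_ (F.map f)).hom ≫ (λ_ (F.map f)).inv =
      ((α_ (F.map f) (F.map (η B)) (ε' (F.obj B))).inv ≫
        ((F.mapComp f (η B)).inv ≫ F.map₂ (ηnat f) ≫
          (F.mapComp (η A) (U.map (F.map f))).hom) ▷ ε' (F.obj B) ≫
        (α_ (F.map (η A)) (F.map (U.map (F.map f))) (ε' (F.obj B))).hom ≫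
        F.map (η A) ◁ εnat (F.map f) ≫
        (α_ (F.map (η A)) (ε' (F.obj A)) (F.map f)).inv) ≫
      Ψ A ▷ F.map f
  /-- the modification axiom for `Φ` -/
  Φ_mod : ∀ {X Y : C} (h : X ⟶ Y),
    U.map h ◁ Φ Y ≫
      ((α_ (U.map h) (η (U.obj Y)) (U.map (ε' Y))).inv ≫
        ηnat (U.map h) ▷ U.map (ε' Y) ≫
        (α_ (η (U.obj X)) (U.map (F.map (U.map h))) (U.map (ε' Y))).hom ≫
        η (U.obj X) ◁ ((U.mapComp (F.map (U.map h)) (ε' Y)).inv ≫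
          U.map₂ (εnat h) ≫ (U.mapComp (ε' X) h).hom) ≫
        (α_ (η (U.obj X)) (U.map (ε' X)) (U.map h)).inv) =
      (ρ_ (U.map h)).hom ≫ (λ_ (U.map h)).inv ≫ Φ X ▷ U.map h
  /-- the swallowtail identity on the unit side -/
  swallowtail_unit : ∀ A : D,
    (ρ_ (η A)).inv ≫ η A ◁ Φ (F.obj A) ≫
      (α_ (η A) (η (U.obj (F.obj A))) (U.map (ε' (F.obj A)))).inv ≫
      ηnat (η A) ▷ U.map (ε' (F.obj A)) ≫
      (α_ (η A) (U.map (F.map (η A))) (U.map (ε' (F.obj A)))).hom ≫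
      η A ◁ ((U.mapComp (F.map (η A)) (ε' (F.obj A))).inv ≫ U.map₂ (Ψ A) ≫
        (U.mapId (F.obj A)).hom) ≫
      (ρ_ (η A)).hom = 𝟙 (η A)
  /-- the swallowtail identity on the counit side -/
  swallowtail_counit : ∀ X : C,
    (λ_ (ε' X)).inv ≫
      (((F.mapId (U.obj X)).inv ≫ F.map₂ (Φ X) ≫
        (F.mapComp (η (U.obj X)) (U.map (ε' X))).hom) ▷ ε' X) ≫
      (α_ (F.map (η (U.obj X))) (F.map (U.map (ε' X))) (ε' X)).hom ≫
      F.map (η (U.obj X)) ◁ εnat (ε' X) ≫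
      (α_ (F.map (η (U.obj X))) (ε' (F.obj (U.obj X))) (ε' X)).inv ≫
      Ψ (U.obj X) ▷ ε' X ≫ (λ_ (ε' X)).hom = 𝟙 (ε' X)

/-- `(f', ψ)` is a left `U`-extension of `f` along `y`. -/
def IsLeftUExtension (U : Pseudofunctor C D) {A : D} {FA : C} (y : A ⟶ U.obj FA)
    {B : C} (f : A ⟶ U.obj B) (f' : FA ⟶ B) (ψ : f ⟶ y ≫ U.map f') : Prop :=
  ∀ (g : FA ⟶ B) (α : f ⟶ y ≫ U.map g), ∃! θ : f' ⟶ g, ψ ≫ y ◁ U.map₂ θ = α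

variable (F : Pseudofunctor D C) (U : Pseudofunctor C D)

/-- The canonical `U`-extension 2-cell `𝔻_g : g ⟶ y_A ≫ U.map (F.map g ≫ ε_{B'})` obtained by
pasting the colax naturality cell `y_g` with `Φ_{B'}`. -/
def Dcell (adj : ColaxAdjunction F U) {A : D} {B' : C} (g : A ⟶ U.obj B') :
    g ⟶ adj.η A ≫ U.map (F.map g ≫ adj.ε' B') :=
  (ρ_ g).inv ≫ g ◁ adj.Φ B' ≫ (α_ g (adj.η (U.obj B')) (U.map (adj.ε' B'))).inv ≫
    adj.ηnat g ▷ U.map (adj.ε' B') ≫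
    (α_ (adj.η A) (U.map (F.map g)) (U.map (adj.ε' B'))).hom ≫
    adj.η A ◁ (U.mapComp (F.map g) (adj.ε' B')).inv

/-- The comparison 2-cell `β_f := Ψ_B F f ∘ ε_{FB} γ⁻¹ : ε_{FB} ∘ F(y_B f) ⟶ F f`. -/
def βcell (adj : ColaxAdjunction F U) {A B : D} (f : A ⟶ B) :
    F.map (f ≫ adj.η B) ≫ adj.ε' (F.obj B) ⟶ F.map f :=
  (F.mapComp f (adj.η B)).hom ▷ adj.ε' (F.obj B) ≫
    (α_ (F.map f) (F.map (adj.η B)) (adj.ε' (F.obj B))).hom ≫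
    F.map f ◁ adj.Ψ B ≫ (ρ_ (F.map f)).hom


section Aux

variable {F U}

lemma pf_map₂_associator_inv {X : Type*} [Bicategory X] {Y : Type*} [Bicategory Y]
    (G : Pseudofunctor X Y) {a b c d : X} (f : a ⟶ b) (g : b ⟶ c) (h : c ⟶ d) :
    G.map₂ (α_ f g h).inv = (G.mapComp f (g ≫ h)).hom ≫ G.map f ◁ (G.mapComp g h).hom ≫
      (α_ (G.map f) (G.map g) (G.map h)).inv ≫ (G.mapComp f g).inv ▷ G.map h ≫
      (G.mapComp (f ≫ g) h).inv := by
  rw [← cancel_epi (G.map₂ (α_ f g h).hom), PrelaxFunctor.map₂_hom_inv]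
  simp

lemma pf_map₂_right_unitor_inv {X : Type*} [Bicategory X] {Y : Type*} [Bicategory Y]
    (G : Pseudofunctor X Y) {a b : X} (f : a ⟶ b) :
    G.map₂ (ρ_ f).inv = (ρ_ (G.map f)).inv ≫ G.map f ◁ (G.mapId b).inv ≫
      (G.mapComp f (𝟙 b)).inv := by
  rw [← cancel_epi (G.map₂ (ρ_ f).hom), PrelaxFunctor.map₂_hom_inv]
  simp

/-- The candidate mediating 2-cell `F g ≫ ε ⟶ k` associated to `α : g ⟶ η A ≫ U k`. -/
def θcell (adj : ColaxAdjunction F U) {A : D} {B' : C} {g : A ⟶ U.obj B'}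
    {k : F.obj A ⟶ B'} (α : g ⟶ adj.η A ≫ U.map k) : F.map g ≫ adj.ε' B' ⟶ k :=
  (F.map₂ α ≫ (F.mapComp (adj.η A) (U.map k)).hom) ▷ adj.ε' B' ≫
    (α_ (F.map (adj.η A)) (F.map (U.map k)) (adj.ε' B')).hom ≫
    F.map (adj.η A) ◁ adj.εnat k ≫
    (α_ (F.map (adj.η A)) (adj.ε' (F.obj A)) k).inv ≫
    adj.Ψ A ▷ k ≫ (λ_ k).hom

lemma θcell_eq (adj : ColaxAdjunction F U) {A : D} {B' : C} {g : A ⟶ U.obj B'}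
    {k : F.obj A ⟶ B'} (α : g ⟶ adj.η A ≫ U.map k) :
    θcell adj α = (F.map₂ α ≫ (F.mapComp (adj.η A) (U.map k)).hom) ▷ adj.ε' B' ⊗≫
      F.map (adj.η A) ◁ adj.εnat k ⊗≫ adj.Ψ A ▷ k ⊗≫ 𝟙 k := by
  dsimp only [θcell]; bicategory

lemma Dcell_eq (adj : ColaxAdjunction F U) {A : D} {B' : C} (g : A ⟶ U.obj B') :
    Dcell F U adj g = 𝟙 g ⊗≫ g ◁ adj.Φ B' ⊗≫ adj.ηnat g ▷ U.map (adj.ε' B') ⊗≫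
      adj.η A ◁ (U.mapComp (F.map g) (adj.ε' B')).inv := by
  dsimp only [Dcell]; bicategory

lemma θcell_comp (adj : ColaxAdjunction F U) {A : D} {B' : C} {g : A ⟶ U.obj B'}
    {k₀ k : F.obj A ⟶ B'} (α : g ⟶ adj.η A ≫ U.map k₀) (θ : k₀ ⟶ k) :
    θcell adj (α ≫ adj.η A ◁ U.map₂ θ) = θcell adj α ≫ θ := by
  calc θcell adj (α ≫ adj.η A ◁ U.map₂ θ)
      = (F.map₂ α ≫ (F.mapComp (adj.η A) (U.map k₀)).hom) ▷ adj.ε' B' ⊗≫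
          (F.map (adj.η A) ◁ F.map₂ (U.map₂ θ)) ▷ adj.ε' B' ⊗≫
          F.map (adj.η A) ◁ adj.εnat k ⊗≫ adj.Ψ A ▷ k ⊗≫ 𝟙 k := by
        dsimp only [θcell]
        rw [PrelaxFunctor.map₂_comp, F.map₂_whisker_left]
        simp only [Category.assoc, Iso.inv_hom_id, Category.comp_id, Iso.inv_hom_id_assoc]
        bicategory
    _ = (F.map₂ α ≫ (F.mapComp (adj.η A) (U.map k₀)).hom) ▷ adj.ε' B' ⊗≫
          F.map (adj.η A) ◁ (F.map₂ (U.map₂ θ) ▷ adj.ε' B' ≫ adj.εnat k) ⊗≫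
          adj.Ψ A ▷ k ⊗≫ 𝟙 k := by bicategory
    _ = (F.map₂ α ≫ (F.mapComp (adj.η A) (U.map k₀)).hom) ▷ adj.ε' B' ⊗≫
          F.map (adj.η A) ◁ (adj.εnat k₀ ≫ adj.ε' (F.obj A) ◁ θ) ⊗≫
          adj.Ψ A ▷ k ⊗≫ 𝟙 k := by rw [adj.ε_natural]
    _ = (F.map₂ α ≫ (F.mapComp (adj.η A) (U.map k₀)).hom) ▷ adj.ε' B' ⊗≫
          F.map (adj.η A) ◁ adj.εnat k₀ ⊗≫
          ((F.map (adj.η A) ≫ adj.ε' (F.obj A)) ◁ θ ≫ adj.Ψ A ▷ k) ⊗≫ 𝟙 k := by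
        bicategory
    _ = (F.map₂ α ≫ (F.mapComp (adj.η A) (U.map k₀)).hom) ▷ adj.ε' B' ⊗≫
          F.map (adj.η A) ◁ adj.εnat k₀ ⊗≫
          (adj.Ψ A ▷ k₀ ≫ 𝟙 (F.obj A) ◁ θ) ⊗≫ 𝟙 k := by rw [whisker_exchange]
    _ = θcell adj α ≫ θ := by dsimp only [θcell]; bicategory

lemma θcell_whisker (adj : ColaxAdjunction F U) {A : D} {B' : C} {g g' : A ⟶ U.obj B'}
    (α' : g ⟶ g') {k : F.obj A ⟶ B'} (α : g' ⟶ adj.η A ≫ U.map k) :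
    θcell adj (α' ≫ α) = F.map₂ α' ▷ adj.ε' B' ≫ θcell adj α := by
  dsimp only [θcell]
  simp [PrelaxFunctor.map₂_comp]

lemma Dcell_natural (adj : ColaxAdjunction F U) {A : D} {B' : C} {g g' : A ⟶ U.obj B'}
    (α' : g ⟶ g') :
    Dcell F U adj g ≫ adj.η A ◁ U.map₂ (F.map₂ α' ▷ adj.ε' B') = α' ≫ Dcell F U adj g' := by
  calc Dcell F U adj g ≫ adj.η A ◁ U.map₂ (F.map₂ α' ▷ adj.ε' B')
      = 𝟙 g ⊗≫ g ◁ adj.Φ B' ⊗≫ adj.ηnat g ▷ U.map (adj.ε' B') ⊗≫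
          adj.η A ◁ ((U.mapComp (F.map g) (adj.ε' B')).inv ≫ U.map₂ (F.map₂ α' ▷ adj.ε' B')) := by
        rw [Dcell_eq]; bicategory
    _ = 𝟙 g ⊗≫ g ◁ adj.Φ B' ⊗≫
          (adj.ηnat g ≫ adj.η A ◁ U.map₂ (F.map₂ α')) ▷ U.map (adj.ε' B') ⊗≫
          adj.η A ◁ (U.mapComp (F.map g') (adj.ε' B')).inv := by
        rw [U.map₂_whisker_right]
        simp only [Category.assoc, Iso.inv_hom_id, Category.comp_id, Iso.inv_hom_id_assoc]
        bicategory
    _ = 𝟙 g ⊗≫ g ◁ adj.Φ B' ⊗≫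
          (α' ▷ adj.η (U.obj B') ≫ adj.ηnat g') ▷ U.map (adj.ε' B') ⊗≫
          adj.η A ◁ (U.mapComp (F.map g') (adj.ε' B')).inv := by
        rw [adj.η_natural]
    _ = 𝟙 g ⊗≫ (g ◁ adj.Φ B' ≫ α' ▷ (adj.η (U.obj B') ≫ U.map (adj.ε' B'))) ⊗≫
          adj.ηnat g' ▷ U.map (adj.ε' B') ⊗≫
          adj.η A ◁ (U.mapComp (F.map g') (adj.ε' B')).inv := by bicategory
    _ = 𝟙 g ⊗≫ (α' ▷ 𝟙 (U.obj B') ≫ g' ◁ adj.Φ B') ⊗≫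
          adj.ηnat g' ▷ U.map (adj.ε' B') ⊗≫
          adj.η A ◁ (U.mapComp (F.map g') (adj.ε' B')).inv := by rw [← whisker_exchange]
    _ = α' ≫ Dcell F U adj g' := by rw [Dcell_eq]; bicategory

lemma Dcell_θcell_id (adj : ColaxAdjunction F U) {A : D} {B' : C} (k : F.obj A ⟶ B') :
    Dcell F U adj (adj.η A ≫ U.map k) ≫
      adj.η A ◁ U.map₂ (θcell adj (𝟙 (adj.η A ≫ U.map k))) = 𝟙 (adj.η A ≫ U.map k) := by
  have hx : ((U.mapComp (F.map (adj.η A)) (F.map (U.map k))).inv ≫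
      U.map₂ (F.mapComp (adj.η A) (U.map k)).inv) ≫
      U.map₂ (F.mapComp (adj.η A) (U.map k)).hom ≫
      (U.mapComp (F.map (adj.η A)) (F.map (U.map k))).hom =
      𝟙 (U.map (F.map (adj.η A)) ≫ U.map (F.map (U.map k))) := by
    simp [PrelaxFunctor.map₂_inv_hom_assoc]
  have hS : adj.η A ◁ adj.Φ (F.obj A) ⊗≫ adj.ηnat (adj.η A) ▷ U.map (adj.ε' (F.obj A)) ⊗≫
      adj.η A ◁ ((U.mapComp (F.map (adj.η A)) (adj.ε' (F.obj A))).inv ≫ U.map₂ (adj.Ψ A) ≫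
        (U.mapId (F.obj A)).hom) = 𝟙 (adj.η A ≫ 𝟙 (U.obj (F.obj A))) := by
    calc adj.η A ◁ adj.Φ (F.obj A) ⊗≫ adj.ηnat (adj.η A) ▷ U.map (adj.ε' (F.obj A)) ⊗≫
        adj.η A ◁ ((U.mapComp (F.map (adj.η A)) (adj.ε' (F.obj A))).inv ≫ U.map₂ (adj.Ψ A) ≫
          (U.mapId (F.obj A)).hom)
        = (ρ_ (adj.η A)).hom ≫ ((ρ_ (adj.η A)).inv ≫ adj.η A ◁ adj.Φ (F.obj A) ≫
            (α_ (adj.η A) (adj.η (U.obj (F.obj A))) (U.map (adj.ε' (F.obj A)))).inv ≫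
            adj.ηnat (adj.η A) ▷ U.map (adj.ε' (F.obj A)) ≫
            (α_ (adj.η A) (U.map (F.map (adj.η A))) (U.map (adj.ε' (F.obj A)))).hom ≫
            adj.η A ◁ ((U.mapComp (F.map (adj.η A)) (adj.ε' (F.obj A))).inv ≫
              U.map₂ (adj.Ψ A) ≫ (U.mapId (F.obj A)).hom) ≫
            (ρ_ (adj.η A)).hom) ≫ (ρ_ (adj.η A)).inv := by
          bicategory
      _ = 𝟙 (adj.η A ≫ 𝟙 (U.obj (F.obj A))) := by
          rw [adj.swallowtail_unit A]; simp
  calc Dcell F U adj (adj.η A ≫ U.map k) ≫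
      adj.η A ◁ U.map₂ (θcell adj (𝟙 (adj.η A ≫ U.map k)))
      = 𝟙 _ ⊗≫ (adj.η A ≫ U.map k) ◁ adj.Φ B' ⊗≫
          adj.ηnat (adj.η A ≫ U.map k) ▷ U.map (adj.ε' B') ⊗≫
          adj.η A ◁ ((U.map₂ (F.mapComp (adj.η A) (U.map k)).hom ≫
            (U.mapComp (F.map (adj.η A)) (F.map (U.map k))).hom) ▷ U.map (adj.ε' B')) ⊗≫
          adj.η A ◁ (U.map (F.map (adj.η A)) ◁
            ((U.mapComp (F.map (U.map k)) (adj.ε' B')).inv ≫ U.map₂ (adj.εnat k) ≫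
              (U.mapComp (adj.ε' (F.obj A)) k).hom)) ⊗≫
          adj.η A ◁ (((U.mapComp (F.map (adj.η A)) (adj.ε' (F.obj A))).inv ≫
            U.map₂ (adj.Ψ A) ≫ (U.mapId (F.obj A)).hom) ▷ U.map k) ⊗≫ 𝟙 _ := by
        dsimp only [Dcell, θcell]
        simp only [PrelaxFunctor.map₂_id, Category.id_comp, PrelaxFunctor.map₂_comp,
          Pseudofunctor.map₂_whisker_right, Pseudofunctor.map₂_whisker_left,
          Pseudofunctor.map₂_associator, Pseudofunctor.map₂_left_unitor,
          pf_map₂_associator_inv, Category.assoc, Iso.inv_hom_id_assoc,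
          Bicategory.whiskerLeft_comp, comp_whiskerRight, whiskerLeft_hom_inv_assoc,
          whiskerLeft_inv_hom_assoc, hom_inv_whiskerRight_assoc, inv_hom_whiskerRight_assoc]
        bicategory
    _ = 𝟙 _ ⊗≫ (adj.η A ≫ U.map k) ◁ adj.Φ B' ⊗≫
          (adj.η A ◁ adj.ηnat (U.map k)) ▷ U.map (adj.ε' B') ⊗≫
          (adj.ηnat (adj.η A) ▷ U.map (F.map (U.map k))) ▷ U.map (adj.ε' B') ⊗≫
          adj.η A ◁ ((((U.mapComp (F.map (adj.η A)) (F.map (U.map k))).inv ≫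
            U.map₂ (F.mapComp (adj.η A) (U.map k)).inv) ≫
            U.map₂ (F.mapComp (adj.η A) (U.map k)).hom ≫
            (U.mapComp (F.map (adj.η A)) (F.map (U.map k))).hom) ▷ U.map (adj.ε' B')) ⊗≫
          adj.η A ◁ (U.map (F.map (adj.η A)) ◁
            ((U.mapComp (F.map (U.map k)) (adj.ε' B')).inv ≫ U.map₂ (adj.εnat k) ≫
              (U.mapComp (adj.ε' (F.obj A)) k).hom)) ⊗≫
          adj.η A ◁ (((U.mapComp (F.map (adj.η A)) (adj.ε' (F.obj A))).inv ≫
            U.map₂ (adj.Ψ A) ≫ (U.mapId (F.obj A)).hom) ▷ U.map k) ⊗≫ 𝟙 _ := by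
        rw [adj.η_comp]
        bicategory
    _ = 𝟙 _ ⊗≫ (adj.η A ≫ U.map k) ◁ adj.Φ B' ⊗≫
          (adj.η A ◁ adj.ηnat (U.map k)) ▷ U.map (adj.ε' B') ⊗≫
          (adj.ηnat (adj.η A) ▷ (U.map (F.map (U.map k)) ≫ U.map (adj.ε' B')) ≫
            (adj.η A ≫ U.map (F.map (adj.η A))) ◁
              ((U.mapComp (F.map (U.map k)) (adj.ε' B')).inv ≫ U.map₂ (adj.εnat k) ≫
                (U.mapComp (adj.ε' (F.obj A)) k).hom)) ⊗≫
          adj.η A ◁ (((U.mapComp (F.map (adj.η A)) (adj.ε' (F.obj A))).inv ≫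
            U.map₂ (adj.Ψ A) ≫ (U.mapId (F.obj A)).hom) ▷ U.map k) ⊗≫ 𝟙 _ := by
        rw [hx]
        bicategory
    _ = 𝟙 _ ⊗≫ (adj.η A ≫ U.map k) ◁ adj.Φ B' ⊗≫
          (adj.η A ◁ adj.ηnat (U.map k)) ▷ U.map (adj.ε' B') ⊗≫
          ((adj.η A ≫ adj.η (U.obj (F.obj A))) ◁
              ((U.mapComp (F.map (U.map k)) (adj.ε' B')).inv ≫ U.map₂ (adj.εnat k) ≫
                (U.mapComp (adj.ε' (F.obj A)) k).hom) ≫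
            adj.ηnat (adj.η A) ▷ (U.map (adj.ε' (F.obj A)) ≫ U.map k)) ⊗≫
          adj.η A ◁ (((U.mapComp (F.map (adj.η A)) (adj.ε' (F.obj A))).inv ≫
            U.map₂ (adj.Ψ A) ≫ (U.mapId (F.obj A)).hom) ▷ U.map k) ⊗≫ 𝟙 _ := by
        rw [← whisker_exchange]
    _ = 𝟙 _ ⊗≫ adj.η A ◁ (U.map k ◁ adj.Φ B' ≫
          ((α_ (U.map k) (adj.η (U.obj B')) (U.map (adj.ε' B'))).inv ≫
            adj.ηnat (U.map k) ▷ U.map (adj.ε' B') ≫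
            (α_ (adj.η (U.obj (F.obj A))) (U.map (F.map (U.map k))) (U.map (adj.ε' B'))).hom ≫
            adj.η (U.obj (F.obj A)) ◁ ((U.mapComp (F.map (U.map k)) (adj.ε' B')).inv ≫
              U.map₂ (adj.εnat k) ≫ (U.mapComp (adj.ε' (F.obj A)) k).hom) ≫
            (α_ (adj.η (U.obj (F.obj A))) (U.map (adj.ε' (F.obj A))) (U.map k)).inv)) ⊗≫
          (adj.ηnat (adj.η A) ▷ U.map (adj.ε' (F.obj A))) ▷ U.map k ⊗≫
          adj.η A ◁ (((U.mapComp (F.map (adj.η A)) (adj.ε' (F.obj A))).inv ≫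
            U.map₂ (adj.Ψ A) ≫ (U.mapId (F.obj A)).hom) ▷ U.map k) ⊗≫ 𝟙 _ := by
        bicategory
    _ = 𝟙 _ ⊗≫ adj.η A ◁ ((ρ_ (U.map k)).hom ≫ (λ_ (U.map k)).inv ≫
            adj.Φ (F.obj A) ▷ U.map k) ⊗≫
          (adj.ηnat (adj.η A) ▷ U.map (adj.ε' (F.obj A))) ▷ U.map k ⊗≫
          adj.η A ◁ (((U.mapComp (F.map (adj.η A)) (adj.ε' (F.obj A))).inv ≫
            U.map₂ (adj.Ψ A) ≫ (U.mapId (F.obj A)).hom) ▷ U.map k) ⊗≫ 𝟙 _ := by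
        rw [adj.Φ_mod k]
    _ = 𝟙 _ ⊗≫ (adj.η A ◁ adj.Φ (F.obj A) ⊗≫
          adj.ηnat (adj.η A) ▷ U.map (adj.ε' (F.obj A)) ⊗≫
          adj.η A ◁ ((U.mapComp (F.map (adj.η A)) (adj.ε' (F.obj A))).inv ≫
            U.map₂ (adj.Ψ A) ≫ (U.mapId (F.obj A)).hom)) ▷ U.map k ⊗≫ 𝟙 _ := by
        bicategory
    _ = 𝟙 (adj.η A ≫ U.map k) := by rw [hS]; bicategory

lemma θcell_Dcell_id (adj : ColaxAdjunction F U) {A : D} {B' : C} (g : A ⟶ U.obj B') :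
    θcell adj (Dcell F U adj g) = 𝟙 (F.map g ≫ adj.ε' B') := by
  have hx2 : ((F.mapComp (U.map (F.map g)) (U.map (adj.ε' B'))).inv ≫
      F.map₂ (U.mapComp (F.map g) (adj.ε' B')).inv) ≫
      F.map₂ (U.mapComp (F.map g) (adj.ε' B')).hom ≫
      (F.mapComp (U.map (F.map g)) (U.map (adj.ε' B'))).hom =
      𝟙 (F.map (U.map (F.map g)) ≫ F.map (U.map (adj.ε' B'))) := by
    simp [PrelaxFunctor.map₂_inv_hom_assoc]
  calc θcell adj (Dcell F U adj g)
      = 𝟙 _ ⊗≫ (F.map g ◁ ((F.mapId (U.obj B')).inv ≫ F.map₂ (adj.Φ B') ≫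
            (F.mapComp (adj.η (U.obj B')) (U.map (adj.ε' B'))).hom)) ▷ adj.ε' B' ⊗≫
          (((F.mapComp g (adj.η (U.obj B'))).inv ≫ F.map₂ (adj.ηnat g) ≫
            (F.mapComp (adj.η A) (U.map (F.map g))).hom) ▷ F.map (U.map (adj.ε' B'))) ▷
            adj.ε' B' ⊗≫
          (F.map (adj.η A) ◁ ((F.mapComp (U.map (F.map g)) (U.map (adj.ε' B'))).inv ≫
            F.map₂ (U.mapComp (F.map g) (adj.ε' B')).inv)) ▷ adj.ε' B' ⊗≫
          F.map (adj.η A) ◁ adj.εnat (F.map g ≫ adj.ε' B') ⊗≫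
          adj.Ψ A ▷ (F.map g ≫ adj.ε' B') ⊗≫ 𝟙 _ := by
        dsimp only [θcell, Dcell]
        simp only [PrelaxFunctor.map₂_id, Category.id_comp, PrelaxFunctor.map₂_comp,
          Pseudofunctor.map₂_whisker_right, Pseudofunctor.map₂_whisker_left,
          Pseudofunctor.map₂_associator, Pseudofunctor.map₂_left_unitor,
          pf_map₂_associator_inv, pf_map₂_right_unitor_inv, Category.assoc,
          Iso.inv_hom_id_assoc, Bicategory.whiskerLeft_comp, comp_whiskerRight,
          whiskerLeft_hom_inv_assoc, whiskerLeft_inv_hom_assoc, hom_inv_whiskerRight_assoc,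
          inv_hom_whiskerRight_assoc, PrelaxFunctor.map₂_inv_hom_assoc,
          PrelaxFunctor.map₂_hom_inv_assoc]
        bicategory
    _ = 𝟙 _ ⊗≫ (F.map g ◁ ((F.mapId (U.obj B')).inv ≫ F.map₂ (adj.Φ B') ≫
            (F.mapComp (adj.η (U.obj B')) (U.map (adj.ε' B'))).hom)) ▷ adj.ε' B' ⊗≫
          (((F.mapComp g (adj.η (U.obj B'))).inv ≫ F.map₂ (adj.ηnat g) ≫
            (F.mapComp (adj.η A) (U.map (F.map g))).hom) ▷ F.map (U.map (adj.ε' B'))) ▷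
            adj.ε' B' ⊗≫
          F.map (adj.η A) ◁ ((((F.mapComp (U.map (F.map g)) (U.map (adj.ε' B'))).inv ≫
            F.map₂ (U.mapComp (F.map g) (adj.ε' B')).inv) ≫
            F.map₂ (U.mapComp (F.map g) (adj.ε' B')).hom ≫
            (F.mapComp (U.map (F.map g)) (U.map (adj.ε' B'))).hom) ▷ adj.ε' B') ⊗≫
          F.map (adj.η A) ◁ (F.map (U.map (F.map g)) ◁ adj.εnat (adj.ε' B')) ⊗≫
          F.map (adj.η A) ◁ (adj.εnat (F.map g) ▷ adj.ε' B') ⊗≫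
          adj.Ψ A ▷ (F.map g ≫ adj.ε' B') ⊗≫ 𝟙 _ := by
        rw [adj.ε_comp]
        bicategory
    _ = 𝟙 _ ⊗≫ (F.map g ◁ ((F.mapId (U.obj B')).inv ≫ F.map₂ (adj.Φ B') ≫
            (F.mapComp (adj.η (U.obj B')) (U.map (adj.ε' B'))).hom)) ▷ adj.ε' B' ⊗≫
          (((F.mapComp g (adj.η (U.obj B'))).inv ≫ F.map₂ (adj.ηnat g) ≫
            (F.mapComp (adj.η A) (U.map (F.map g))).hom) ▷
            (F.map (U.map (adj.ε' B')) ≫ adj.ε' B') ≫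
            (F.map (adj.η A) ≫ F.map (U.map (F.map g))) ◁ adj.εnat (adj.ε' B')) ⊗≫
          F.map (adj.η A) ◁ (adj.εnat (F.map g) ▷ adj.ε' B') ⊗≫
          adj.Ψ A ▷ (F.map g ≫ adj.ε' B') ⊗≫ 𝟙 _ := by
        rw [hx2]
        bicategory
    _ = 𝟙 _ ⊗≫ (F.map g ◁ ((F.mapId (U.obj B')).inv ≫ F.map₂ (adj.Φ B') ≫
            (F.mapComp (adj.η (U.obj B')) (U.map (adj.ε' B'))).hom)) ▷ adj.ε' B' ⊗≫
          ((F.map g ≫ F.map (adj.η (U.obj B'))) ◁ adj.εnat (adj.ε' B') ≫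
            ((F.mapComp g (adj.η (U.obj B'))).inv ≫ F.map₂ (adj.ηnat g) ≫
              (F.mapComp (adj.η A) (U.map (F.map g))).hom) ▷
              (adj.ε' (F.obj (U.obj B')) ≫ adj.ε' B')) ⊗≫
          F.map (adj.η A) ◁ (adj.εnat (F.map g) ▷ adj.ε' B') ⊗≫
          adj.Ψ A ▷ (F.map g ≫ adj.ε' B') ⊗≫ 𝟙 _ := by
        rw [← whisker_exchange]
    _ = 𝟙 _ ⊗≫ (F.map g ◁ ((F.mapId (U.obj B')).inv ≫ F.map₂ (adj.Φ B') ≫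
            (F.mapComp (adj.η (U.obj B')) (U.map (adj.ε' B'))).hom)) ▷ adj.ε' B' ⊗≫
          F.map g ◁ (F.map (adj.η (U.obj B')) ◁ adj.εnat (adj.ε' B')) ⊗≫
          ((((α_ (F.map g) (F.map (adj.η (U.obj B'))) (adj.ε' (F.obj (U.obj B')))).inv ≫
            ((F.mapComp g (adj.η (U.obj B'))).inv ≫ F.map₂ (adj.ηnat g) ≫
              (F.mapComp (adj.η A) (U.map (F.map g))).hom) ▷ adj.ε' (F.obj (U.obj B')) ≫
            (α_ (F.map (adj.η A)) (F.map (U.map (F.map g)))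
              (adj.ε' (F.obj (U.obj B')))).hom ≫
            F.map (adj.η A) ◁ adj.εnat (F.map g) ≫
            (α_ (F.map (adj.η A)) (adj.ε' (F.obj A)) (F.map g)).inv) ≫
            adj.Ψ A ▷ F.map g) ▷ adj.ε' B') ⊗≫ 𝟙 _ := by
        bicategory
    _ = 𝟙 _ ⊗≫ (F.map g ◁ ((F.mapId (U.obj B')).inv ≫ F.map₂ (adj.Φ B') ≫
            (F.mapComp (adj.η (U.obj B')) (U.map (adj.ε' B'))).hom)) ▷ adj.ε' B' ⊗≫
          F.map g ◁ (F.map (adj.η (U.obj B')) ◁ adj.εnat (adj.ε' B')) ⊗≫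
          ((F.map g ◁ adj.Ψ (U.obj B') ≫ (ρ_ (F.map g)).hom ≫ (λ_ (F.map g)).inv) ▷
            adj.ε' B') ⊗≫ 𝟙 _ := by
        rw [← adj.Ψ_mod g]
    _ = 𝟙 _ ⊗≫ F.map g ◁ ((λ_ (adj.ε' B')).inv ≫
          (((F.mapId (U.obj B')).inv ≫ F.map₂ (adj.Φ B') ≫
            (F.mapComp (adj.η (U.obj B')) (U.map (adj.ε' B'))).hom) ▷ adj.ε' B') ≫
          (α_ (F.map (adj.η (U.obj B'))) (F.map (U.map (adj.ε' B'))) (adj.ε' B')).hom ≫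
          F.map (adj.η (U.obj B')) ◁ adj.εnat (adj.ε' B') ≫
          (α_ (F.map (adj.η (U.obj B'))) (adj.ε' (F.obj (U.obj B'))) (adj.ε' B')).inv ≫
          adj.Ψ (U.obj B') ▷ adj.ε' B' ≫ (λ_ (adj.ε' B')).hom) ⊗≫ 𝟙 _ := by
        bicategory
    _ = 𝟙 (F.map g ≫ adj.ε' B') := by
        rw [adj.swallowtail_counit B']
        bicategory

lemma Dcell_θcell (adj : ColaxAdjunction F U) {A : D} {B' : C} {g : A ⟶ U.obj B'}
    {k : F.obj A ⟶ B'} (α : g ⟶ adj.η A ≫ U.map k) :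
    Dcell F U adj g ≫ adj.η A ◁ U.map₂ (θcell adj α) = α := by
  have h1 : θcell adj α = F.map₂ α ▷ adj.ε' B' ≫ θcell adj (𝟙 (adj.η A ≫ U.map k)) := by
    simpa using θcell_whisker adj α (𝟙 (adj.η A ≫ U.map k))
  rw [h1, U.map₂_comp, Bicategory.whiskerLeft_comp, ← Category.assoc,
    Dcell_natural adj α, Category.assoc, Dcell_θcell_id adj k, Category.comp_id]

lemma θcell_unique (adj : ColaxAdjunction F U) {A : D} {B' : C} {g : A ⟶ U.obj B'}
    {k : F.obj A ⟶ B'} (α : g ⟶ adj.η A ≫ U.map k) (θ : F.map g ≫ adj.ε' B' ⟶ k)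
    (h : Dcell F U adj g ≫ adj.η A ◁ U.map₂ θ = α) : θ = θcell adj α := by
  rw [← h, θcell_comp adj (Dcell F U adj g) θ, θcell_Dcell_id adj g, Category.id_comp]

lemma θcell_ηnat (adj : ColaxAdjunction F U) {A B : D} (f : A ⟶ B) :
    θcell adj (adj.ηnat f) = βcell F U adj f := by
  have h := congrArg (fun x => x ≫ (λ_ (F.map f)).hom) (adj.Ψ_mod f)
  simp only [Category.assoc, Iso.inv_hom_id, Category.comp_id] at h
  dsimp only [θcell, βcell]
  rw [h]
  simp only [comp_whiskerRight, Category.assoc, Iso.hom_inv_id_assoc,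
    Iso.inv_hom_id_assoc, Iso.hom_inv_id, Category.comp_id, hom_inv_whiskerRight_assoc,
    inv_hom_whiskerRight_assoc, hom_inv_whiskerRight, inv_hom_whiskerRight]

end Aux


/-- for a colax adjunction `(Ψ, Φ) : (ε, y) : F ⊣⊣ U` with `Ψ` invertible, for
every 1-cell `f : A ⟶ B` in `D` the pair `(UFf, y_f)` exhibits `U (F f)` as a left
`U`-extension of `y_B ∘ f` along `y_A`; in particular `β_f` is invertible and identifies the
two `U`-extensions of `y_B ∘ f` along `y_A`. -/

theorem unit_naturality_is_UExtension (adj : ColaxAdjunction F U)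
    (hΨ : ∀ A : D, IsIso (adj.Ψ A)) {A B : D} (f : A ⟶ B) :
    IsLeftUExtension U (adj.η A) (f ≫ adj.η B) (F.map f) (adj.ηnat f) ∧
    IsIso (βcell F U adj f) ∧
    Dcell F U adj (f ≫ adj.η B) ≫ adj.η A ◁ U.map₂ (βcell F U adj f) = adj.ηnat f := by
  have hβ : θcell adj (adj.ηnat f) = βcell F U adj f := θcell_ηnat adj f
  have h3 : Dcell F U adj (f ≫ adj.η B) ≫ adj.η A ◁ U.map₂ (βcell F U adj f) = adj.ηnat f := by
    rw [← hβ]; exact Dcell_θcell adj (adj.ηnat f)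
  have hβiso : IsIso (βcell F U adj f) := by
    have := hΨ B
    dsimp only [βcell]
    infer_instance
  refine ⟨?_, hβiso, h3⟩
  intro k α
  refine ⟨inv (βcell F U adj f) ≫ θcell adj α, ?_, ?_⟩
  · show adj.ηnat f ≫ adj.η A ◁ U.map₂ (inv (βcell F U adj f) ≫ θcell adj α) = α
    rw [← h3, Category.assoc, ← Bicategory.whiskerLeft_comp, ← U.map₂_comp,
      IsIso.hom_inv_id_assoc]
    exact Dcell_θcell adj α
  · intro θ' hθ'
    show θ' = inv (βcell F U adj f) ≫ θcell adj α
    have h' : Dcell F U adj (f ≫ adj.η B) ≫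
        adj.η A ◁ U.map₂ (βcell F U adj f ≫ θ') = α := by
      rw [U.map₂_comp, Bicategory.whiskerLeft_comp, ← Category.assoc, h3, hθ']
    have := θcell_unique adj α _ h'
    rw [← this, IsIso.inv_hom_id_assoc]
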